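/- Let m ≥ 1 and n = m + 1. The curve y : ℝ → ℝ^m all of whose components equal y_j(t) = −2·tanh(n t) is a solution of the system (hcu) on ℝ. -/

import Mathlib

lemma my_hasDerivAt_tanh (x : ℝ) :
    HasDerivAt Real.tanh (1 - Real.tanh x ^ 2) x := by
  have h : HasDerivAt (fun y => Real.sinh y / Real.cosh y)
      ((Real.cosh x * Real.cosh x - Real.sinh x * Real.sinh x) / Real.cosh x ^ 2) x :=
    (Real.hasDerivAt_sinh x).div (Real.hasDerivAt_cosh x) (Real.cosh_pos x).ne'
  have hfun : (fun y => Real.sinh y / Real.cosh y) = Real.tanh := by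
    funext y; rw [Real.tanh_eq_sinh_div_cosh]
  rw [hfun] at h
  convert h using 1
  have hc := (Real.cosh_pos x).ne'
  rw [Real.tanh_eq_sinh_div_cosh]
  field_simp

lemma my_contDiff_tanh : ContDiff ℝ 2 Real.tanh := by
  have : Real.tanh = fun y => Real.sinh y / Real.cosh y := by
    funext y; rw [Real.tanh_eq_sinh_div_cosh]
  rw [this]
  exact Real.contDiff_sinh.div Real.contDiff_cosh fun x => (Real.cosh_pos x).ne'

lemma my_d1 (c t : ℝ) :
    HasDerivAt (fun s => -2 * Real.tanh (c * s))
      (-2 * c * (1 - Real.tanh (c * t) ^ 2)) t := by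
  have h := ((my_hasDerivAt_tanh (c * t)).comp t
    ((hasDerivAt_id t).const_mul c)).const_mul (-2 : ℝ)
  refine h.congr_deriv ?_
  simp [mul_comm, mul_assoc, mul_left_comm]

lemma my_d2 (c t : ℝ) :
    HasDerivAt (fun s => -2 * c * (1 - Real.tanh (c * s) ^ 2))
      (4 * c ^ 2 * Real.tanh (c * t) * (1 - Real.tanh (c * t) ^ 2)) t := by
  have htanh : HasDerivAt (fun s => Real.tanh (c * s)) (c * (1 - Real.tanh (c * t) ^ 2)) t := by
    have h := (my_hasDerivAt_tanh (c * t)).comp t ((hasDerivAt_id t).const_mul c)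
    refine h.congr_deriv ?_; ring
  have h := ((htanh.pow 2).const_sub 1).const_mul (-2 * c)
  refine h.congr_deriv ?_
  ring

/-- For `n = m + 1`, the curve all of whose components equal
`yⱼ(t) = −2·tanh(n t)` is a (twice differentiable) solution of the system (hcu)
on `ℝ`. -/
theorem stmt_6 (m n : ℕ) (hm : 1 ≤ m) (hn : n = m + 1)
    (y : ℝ → Fin m → ℝ)
    (hy : ∀ t : ℝ, ∀ j, y t j = -2 * Real.tanh ((n : ℝ) * t)) :
    (∀ j, ContDiff ℝ 2 (fun t => y t j)) ∧
    ∀ j, ∀ t : ℝ,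
      deriv (deriv (fun s => y s j)) t
          - ((∑ k, y t k) + y t j) * deriv (fun s => y s j) t
        = y t j * (∑ k, (y t k) ^ 2) - (y t j) ^ 2 * (∑ k, y t k) := by
  set c : ℝ := (n : ℝ)
  have hyf : ∀ j, (fun t => y t j) = fun t => -2 * Real.tanh (c * t) := by
    intro j; funext t; exact hy t j
  have hderiv1 : ∀ j, deriv (fun s => y s j) =
      fun t => -2 * c * (1 - Real.tanh (c * t) ^ 2) := by
    intro j; funext t; rw [hyf j]; exact (my_d1 c t).deriv
  constructor
  · intro j
    rw [hyf j]
    exact contDiff_const.mul (my_contDiff_tanh.comp (contDiff_const.mul contDiff_id))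
  · intro j t
    rw [hderiv1 j, (my_d2 c t).deriv]
    have hsum1 : (∑ k, y t k) = m * (-2 * Real.tanh (c * t)) := by
      simp [hy t, Finset.sum_const, Finset.card_univ, mul_comm]
    have hsum2 : (∑ k, (y t k) ^ 2) = m * (-2 * Real.tanh (c * t)) ^ 2 := by
      simp [hy t, Finset.sum_const, Finset.card_univ, mul_comm]
    rw [hsum1, hsum2, hy t j]
    have hc : c = (m : ℝ) + 1 := by simp [c, hn]
    rw [hc]; ring
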